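/- Let E be a group, K a normal subgroup of E, and G = E/K the quotient group. Suppose E acts on the set K in such a way that the restricted action of K on itself is left translation (i.e., k · x = k*x for all k, x in K). Then the extension 1 → K → E → G → 1 splits: there exists a subgroup S of E with S ∩ K = {1} such that the quotient homomorphism E → G restricts to an isomorphism from S onto G. (Concretely, S may be taken to be the stabilizer in E of any point p ∈ K.) -/
import Mathlib


/-- If a group `E` acts on (the underlying set of) its normal subgroup `K`
in such a way that the restricted action of `K` on itself is left translation, then the
extension `1 → K → E → E/K → 1` splits: there is a subgroup `S` of `E` meeting `K`
trivially such that the quotient map `E → E/K` restricts to a bijection (hence an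
isomorphism) from `S` onto `E/K`. -/
theorem stmt0 {E : Type*} [Group E] (K : Subgroup E) [K.Normal]
    [MulAction E K] (h : ∀ k x : K, (k : E) • x = k * x) :
    ∃ S : Subgroup E, S ⊓ K = ⊥ ∧
      Function.Bijective (fun s : S => QuotientGroup.mk' K (s : E)) := by
  refine ⟨MulAction.stabilizer E (1 : K), ?_, ?_, ?_⟩
  · rw [eq_bot_iff]
    rintro x ⟨hs, hk⟩
    have h1 : ((⟨x, hk⟩ : K) : E) • (1 : K) = 1 := hs
    rw [h] at h1
    have : (⟨x, hk⟩ : K) = 1 := by simpa using h1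
    simpa using congrArg (Subtype.val) this
  · rintro ⟨a, ha⟩ ⟨b, hb⟩ hab
    have hk : a⁻¹ * b ∈ K := (QuotientGroup.eq (s := K)).mp hab
    have hs : a⁻¹ * b ∈ MulAction.stabilizer E (1 : K) := by
      exact mul_mem (inv_mem ha) hb
    have h1 : ((⟨a⁻¹ * b, hk⟩ : K) : E) • (1 : K) = 1 := hs
    rw [h] at h1
    have : (⟨a⁻¹ * b, hk⟩ : K) = 1 := by simpa using h1
    have : a⁻¹ * b = 1 := congrArg Subtype.val this
    ext
    exact (inv_mul_eq_one.mp this)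
  · intro q
    induction q using QuotientGroup.induction_on with
    | H e =>
      set k : K := e • (1 : K) with hkdef
      have hs : (k : E)⁻¹ * e ∈ MulAction.stabilizer E (1 : K) := by
        have : ((k⁻¹ : K) : E) • ((e • (1 : K))) = 1 := by
          rw [← hkdef, h]; simp
        show ((k : E)⁻¹ * e) • (1 : K) = 1
        rw [mul_smul]
        simpa using this
      refine ⟨⟨(k : E)⁻¹ * e, hs⟩, ?_⟩
      show QuotientGroup.mk ((k : E)⁻¹ * e) = QuotientGroup.mk e
      rw [QuotientGroup.eq]
      simpa using Subgroup.Normal.conj_mem' inferInstance _ k.2 e
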